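/- arXiv:2004.05418 — 10 statements merged into one kernel-verified Lean document; each statement's English description precedes it below -/
import Mathlib

section
/- Let z_1, ..., z_N : [0,∞) → C^d be a differentiable solution of Subsystem A: ż_j = κ_0(⟨z_j, z_j⟩ z_c − ⟨z_c, z_j⟩ z_j) with ||z_j(0)|| = 1 for all j, where z_c = (1/N)∑_k z_k. Then for all indices i, j, the quantity 1 − ⟨z_i, z_j⟩ satisfies d/dt (1 − ⟨z_i, z_j⟩) = −κ_0 (1 − ⟨z_i, z_j⟩)(⟨z_i, z_c⟩ + ⟨z_c, z_j⟩). -/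
open scoped ComplexConjugate

theorem stmt2 (d N : ℕ) (κ₀ : ℝ) (hκ : 0 < κ₀)
    (z : Fin N → ℝ → EuclideanSpace ℂ (Fin d))
    (zc : ℝ → EuclideanSpace ℂ (Fin d))
    (hzc : ∀ t : ℝ, zc t = (N : ℂ)⁻¹ • ∑ k, z k t)
    (hinit : ∀ j, ‖z j 0‖ = 1)
    (hode : ∀ (j : Fin N) (t : ℝ), 0 ≤ t → HasDerivAt (z j)
      ((κ₀ : ℂ) • ((inner ℂ (z j t) (z j t) : ℂ) • zc t
          - (inner ℂ (zc t) (z j t) : ℂ) • z j t)) t) :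
    ∀ (i j : Fin N) (t : ℝ), 0 ≤ t →
      HasDerivAt (fun s => (1 : ℂ) - (inner ℂ (z i s) (z j s) : ℂ))
        (-(κ₀ : ℂ) * ((1 : ℂ) - (inner ℂ (z i t) (z j t) : ℂ))
          * ((inner ℂ (z i t) (zc t) : ℂ) + (inner ℂ (zc t) (z j t) : ℂ))) t := by
  -- norm conservation
  have hconst : ∀ (j : Fin N) (t : ℝ), 0 ≤ t →
      (inner ℂ (z j t) (z j t) : ℂ) = 1 := by
    intro j t ht
    set g : ℝ → ℂ := fun s => (inner ℂ (z j s) (z j s) : ℂ) with hg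
    have hderiv : ∀ s : ℝ, 0 ≤ s → HasDerivAt g 0 s := by
      intro s hs
      have h := (hode j s hs).inner ℂ (hode j s hs)
      have hzero :
          (inner ℂ (z j s) ((κ₀ : ℂ) • ((inner ℂ (z j s) (z j s) : ℂ) • zc s
              - (inner ℂ (zc s) (z j s) : ℂ) • z j s)) : ℂ)
          + (inner ℂ ((κ₀ : ℂ) • ((inner ℂ (z j s) (z j s) : ℂ) • zc s
              - (inner ℂ (zc s) (z j s) : ℂ) • z j s)) (z j s) : ℂ) = 0 := by
        have hn : conj (inner ℂ (z j s) (z j s) : ℂ) = (inner ℂ (z j s) (z j s) : ℂ) :=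
          inner_conj_symm _ _
        have hab : conj (inner ℂ (zc s) (z j s) : ℂ) = (inner ℂ (z j s) (zc s) : ℂ) :=
          inner_conj_symm _ _
        simp only [inner_smul_left, inner_smul_right, inner_sub_left, inner_sub_right,
          Complex.conj_ofReal, map_sub, map_mul, hn, hab]
        ring
      rw [hzero] at h
      exact h
    have hcont : ContinuousOn g (Set.Icc 0 t) := fun s hs =>
      (hderiv s hs.1).continuousAt.continuousWithinAt
    have := constant_of_has_deriv_right_zero hcont
      (fun s hs => ((hderiv s hs.1).hasDerivWithinAt)) t (Set.right_mem_Icc.2 ht)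
    have h0 : g 0 = 1 := by
      simp [hg, inner_self_eq_norm_sq_to_K, hinit j]
    rw [h0] at this
    exact this
  intro i j t ht
  have hi := hconst i t ht
  have hj := hconst j t ht
  have h := (hasDerivAt_const t (1 : ℂ)).sub ((hode i t ht).inner ℂ (hode j t ht))
  refine (h : HasDerivAt (fun s => (1 : ℂ) - inner ℂ (z i s) (z j s)) _ t).congr_deriv ?_
  have hn : conj (inner ℂ (z i t) (z i t) : ℂ) = (inner ℂ (z i t) (z i t) : ℂ) :=
    inner_conj_symm _ _
  have hab : conj (inner ℂ (zc t) (z i t) : ℂ) = (inner ℂ (z i t) (zc t) : ℂ) :=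
    inner_conj_symm _ _
  simp only [inner_smul_left, inner_smul_right, inner_sub_left, inner_sub_right,
    Complex.conj_ofReal, map_sub, map_mul, map_one, hn, hab, hi, hj]
  ring
end

section
/- Let z_1, ..., z_N : [0,∞) → C^d solve Subsystem A: ż_j = κ_0(⟨z_j, z_j⟩ z_c − ⟨z_c, z_j⟩ z_j) with unit-norm initial data, and suppose ⟨z_i(t), z_j(t)⟩ ≠ 1 for all relevant pairs and all t. Then for any indices i, j, k, l, the cross-ratio-like functional C_{ijkl}(t) = [(1 − ⟨z_i, z_j⟩)(1 − ⟨z_k, z_l⟩)] / [(1 − ⟨z_i, z_l⟩)(1 − ⟨z_k, z_j⟩)] is constant in time: C_{ijkl}(t) = C_{ijkl}(0) for all t ≥ 0. -/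
theorem stmt3 (d N : ℕ) (κ₀ : ℝ)
    (z : Fin N → ℝ → EuclideanSpace ℂ (Fin d))
    (zc : ℝ → EuclideanSpace ℂ (Fin d))
    (hzc : ∀ t : ℝ, zc t = (N : ℂ)⁻¹ • ∑ k, z k t)
    (hinit : ∀ j, ‖z j 0‖ = 1)
    (hode : ∀ (j : Fin N) (t : ℝ), 0 ≤ t → HasDerivAt (z j)
      ((κ₀ : ℂ) • ((inner ℂ (z j t) (z j t) : ℂ) • zc t
          - (inner ℂ (zc t) (z j t) : ℂ) • z j t)) t)
    (i j k l : Fin N)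
    (hne : ∀ t : ℝ, 0 ≤ t →
      (inner ℂ (z i t) (z j t) : ℂ) ≠ 1 ∧ (inner ℂ (z k t) (z l t) : ℂ) ≠ 1 ∧
      (inner ℂ (z i t) (z l t) : ℂ) ≠ 1 ∧ (inner ℂ (z k t) (z j t) : ℂ) ≠ 1) :
    ∀ t : ℝ, 0 ≤ t →
      ((1 : ℂ) - inner ℂ (z i t) (z j t)) * ((1 : ℂ) - inner ℂ (z k t) (z l t))
        / (((1 : ℂ) - inner ℂ (z i t) (z l t)) * ((1 : ℂ) - inner ℂ (z k t) (z j t)))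
      = ((1 : ℂ) - inner ℂ (z i 0) (z j 0)) * ((1 : ℂ) - inner ℂ (z k 0) (z l 0))
        / (((1 : ℂ) - inner ℂ (z i 0) (z l 0)) * ((1 : ℂ) - inner ℂ (z k 0) (z j 0))) := by
  -- derivative of pairwise inner products
  have hd : ∀ (a b : Fin N) (t : ℝ), 0 ≤ t →
      HasDerivAt (fun s => (inner ℂ (z a s) (z b s) : ℂ))
        ((κ₀ : ℂ) * ((inner ℂ (z a t) (z a t) : ℂ) * inner ℂ (zc t) (z b t)
          + (inner ℂ (z b t) (z b t) : ℂ) * inner ℂ (z a t) (zc t)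
          - ((inner ℂ (z a t) (zc t) : ℂ) + inner ℂ (zc t) (z b t))
              * inner ℂ (z a t) (z b t))) t := by
    intro a b t ht
    have H := HasDerivAt.inner ℂ (hode a t ht) (hode b t ht)
    refine H.congr_deriv ?_
    simp only [inner_sub_left, inner_sub_right, inner_smul_left, inner_smul_right,
      inner_conj_symm, Complex.conj_ofReal, map_mul]
    ring
  -- norms are conserved
  have hr : ∀ (a : Fin N) (t : ℝ), 0 ≤ t → (inner ℂ (z a t) (z a t) : ℂ) = 1 := by
    intro a t ht
    have key : ∀ s ∈ Set.Icc (0:ℝ) t,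
        (inner ℂ (z a s) (z a s) : ℂ) = (inner ℂ (z a 0) (z a 0) : ℂ) := by
      apply constant_of_has_deriv_right_zero
      · intro s hs
        exact (hd a a s hs.1).continuousAt.continuousWithinAt
      · intro s hs
        have h0 := hd a a s hs.1
        have hz : (κ₀ : ℂ) * ((inner ℂ (z a s) (z a s) : ℂ) * inner ℂ (zc s) (z a s)
          + (inner ℂ (z a s) (z a s) : ℂ) * inner ℂ (z a s) (zc s)
          - ((inner ℂ (z a s) (zc s) : ℂ) + inner ℂ (zc s) (z a s))
              * inner ℂ (z a s) (z a s)) = 0 := by ring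
        rw [hz] at h0
        exact h0.hasDerivWithinAt
    have h1 := key t ⟨ht, le_refl t⟩
    rw [h1, inner_self_eq_norm_sq_to_K, hinit a]
    norm_num
  -- derivative of 1 - inner
  have hdh : ∀ (a b : Fin N) (t : ℝ), 0 ≤ t →
      HasDerivAt (fun s => (1 : ℂ) - inner ℂ (z a s) (z b s))
        (-((κ₀ : ℂ) * ((inner ℂ (z a t) (zc t) : ℂ) + inner ℂ (zc t) (z b t)))
          * ((1 : ℂ) - inner ℂ (z a t) (z b t))) t := by
    intro a b t ht
    have H := (hd a b t ht).const_sub 1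
    refine H.congr_deriv ?_
    rw [hr a t ht, hr b t ht]
    ring
  -- the cross ratio
  set f : ℝ → ℂ := fun s =>
    ((1 : ℂ) - inner ℂ (z i s) (z j s)) * ((1 : ℂ) - inner ℂ (z k s) (z l s))
      / (((1 : ℂ) - inner ℂ (z i s) (z l s)) * ((1 : ℂ) - inner ℂ (z k s) (z j s))) with hf
  have hdf : ∀ t : ℝ, 0 ≤ t → HasDerivAt f 0 t := by
    intro t ht
    obtain ⟨hn1, hn2, hn3, hn4⟩ := hne t ht
    have hG : ((1 : ℂ) - inner ℂ (z i t) (z l t)) * ((1 : ℂ) - inner ℂ (z k t) (z j t)) ≠ 0 :=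
      mul_ne_zero (sub_ne_zero.mpr (Ne.symm hn3)) (sub_ne_zero.mpr (Ne.symm hn4))
    have H := ((hdh i j t ht).mul (hdh k l t ht)).div
      ((hdh i l t ht).mul (hdh k j t ht)) hG
    refine H.congr_deriv ?_
    simp only [Pi.mul_apply]
    rw [div_eq_zero_iff]
    left
    ring
  intro t ht
  have key : ∀ s ∈ Set.Icc (0:ℝ) t, f s = f 0 := by
    apply constant_of_has_deriv_right_zero
    · intro s hs
      exact (hdf s hs.1).continuousAt.continuousWithinAt
    · intro s hs
      exact (hdf s hs.1).hasDerivWithinAt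
  exact key t ⟨ht, le_refl t⟩
end

section
/- Let z_1, ..., z_N : [0,∞) → C^d solve Subsystem A: ż_j = κ_0(⟨z_j, z_j⟩ z_c − ⟨z_c, z_j⟩ z_j) with ||z_j(t)|| = 1 for all t, and set ρ(t) = ||z_c(t)||. Then d(ρ²)/dt = (2κ_0/N) ∑_{i=1}^N (ρ² − Re(⟨z_i, z_c⟩²)) ≥ 0; in particular ρ is non-decreasing. -/
theorem stmt4 (d N : ℕ) (κ₀ : ℝ) (hκ : 0 < κ₀)
    (z : Fin N → ℝ → EuclideanSpace ℂ (Fin d))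
    (zc : ℝ → EuclideanSpace ℂ (Fin d))
    (hzc : ∀ t : ℝ, zc t = (N : ℂ)⁻¹ • ∑ k, z k t)
    (hnorm : ∀ (j : Fin N) (t : ℝ), 0 ≤ t → ‖z j t‖ = 1)
    (hode : ∀ (j : Fin N) (t : ℝ), 0 ≤ t → HasDerivAt (z j)
      ((κ₀ : ℂ) • ((inner ℂ (z j t) (z j t) : ℂ) • zc t
          - (inner ℂ (zc t) (z j t) : ℂ) • z j t)) t) :
    ∀ t : ℝ, 0 ≤ t →
      HasDerivAt (fun s => ‖zc s‖ ^ 2)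
        ((2 * κ₀ / N) * ∑ i, (‖zc t‖ ^ 2 - (((inner ℂ (z i t) (zc t) : ℂ)) ^ 2).re)) t ∧
      0 ≤ (2 * κ₀ / N) * ∑ i, (‖zc t‖ ^ 2 - (((inner ℂ (z i t) (zc t) : ℂ)) ^ 2).re) := by
  intro t ht
  classical
  set v : EuclideanSpace ℂ (Fin d) := (N : ℂ)⁻¹ • ∑ j, ((κ₀ : ℂ) • ((inner ℂ (z j t) (z j t) : ℂ) • zc t
          - (inner ℂ (zc t) (z j t) : ℂ) • z j t)) with hv
  have hzc' : HasDerivAt zc v t := by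
    have hsum : HasDerivAt (fun s => ∑ k, z k s)
        (∑ j, ((κ₀ : ℂ) • ((inner ℂ (z j t) (z j t) : ℂ) • zc t
          - (inner ℂ (zc t) (z j t) : ℂ) • z j t))) t :=
      HasDerivAt.fun_sum (fun j _ => hode j t ht)
    have h1 := hsum.const_smul ((N : ℂ)⁻¹)
    exact h1.congr_of_eventuallyEq (Filter.Eventually.of_forall hzc)
  have hinner : HasDerivAt (fun s => (inner ℂ (zc s) (zc s) : ℂ))
      ((inner ℂ (zc t) v : ℂ) + (inner ℂ v (zc t) : ℂ)) t := hzc'.inner ℂ hzc'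
  have hre : HasDerivAt (fun s => ((inner ℂ (zc s) (zc s) : ℂ)).re)
      (((inner ℂ (zc t) v : ℂ) + (inner ℂ v (zc t) : ℂ)).re) t :=
    Complex.reCLM.hasFDerivAt.comp_hasDerivAt t hinner
  have hfun : (fun s => ‖zc s‖ ^ 2) = fun s => ((inner ℂ (zc s) (zc s) : ℂ)).re := by
    funext s
    rw [← inner_self_eq_norm_sq (𝕜 := ℂ)]
    rfl
  have hval : ((inner ℂ (zc t) v : ℂ) + (inner ℂ v (zc t) : ℂ)).re
      = (2 * κ₀ / N) * ∑ i, (‖zc t‖ ^ 2 - (((inner ℂ (z i t) (zc t) : ℂ)) ^ 2).re) := by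
    have hone : ∀ j : Fin N, (inner ℂ (z j t) (z j t) : ℂ) = 1 := fun j => by
      rw [inner_self_eq_norm_sq_to_K, hnorm j t ht]; norm_num
    have hx : (inner ℂ (zc t) v : ℂ)
        = ((κ₀ : ℂ) / N) * ∑ i, (((‖zc t‖ : ℂ)) ^ 2 - (inner ℂ (zc t) (z i t) : ℂ) ^ 2) := by
      rw [hv, inner_smul_right, inner_sum]
      simp only [inner_smul_right, inner_sub_right, hone, one_mul,
        inner_self_eq_norm_sq_to_K]
      rw [Finset.mul_sum, Finset.mul_sum]
      refine Finset.sum_congr rfl fun i _ => ?_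
      ring_nf
      rw [sub_eq_neg_add]
      rfl
    have hre2 : (inner ℂ (zc t) v : ℂ).re
        = (κ₀ / N) * ∑ i, (‖zc t‖ ^ 2 - (((inner ℂ (z i t) (zc t) : ℂ)) ^ 2).re) := by
      have hcoe : ((κ₀ : ℂ) / N) = ((κ₀ / N : ℝ) : ℂ) := by push_cast; ring
      rw [hx, hcoe, Complex.re_ofReal_mul]
      congr 1
      rw [Complex.re_sum]
      refine Finset.sum_congr rfl fun i _ => ?_
      have hc : (inner ℂ (z i t) (zc t) : ℂ) = starRingEnd ℂ (inner ℂ (zc t) (z i t) : ℂ) :=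
        (inner_conj_symm _ _).symm
      rw [Complex.sub_re, hc, ← map_pow, Complex.conj_re, ← Complex.ofReal_pow,
        Complex.ofReal_re]
    have hsym : (inner ℂ v (zc t) : ℂ).re = (inner ℂ (zc t) v : ℂ).re := by
      rw [← inner_conj_symm]; exact Complex.conj_re _
    rw [Complex.add_re, hsym, hre2]
    ring
  refine ⟨by rw [hfun, ← hval]; exact hre, ?_⟩
  apply mul_nonneg (by positivity)
  refine Finset.sum_nonneg fun i _ => ?_
  have h1 : (((inner ℂ (z i t) (zc t) : ℂ)) ^ 2).re
      ≤ ‖(inner ℂ (z i t) (zc t) : ℂ)‖ ^ 2 := by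
    have h := Complex.re_le_norm ((inner ℂ (z i t) (zc t) : ℂ) ^ 2)
    rwa [norm_pow] at h
  have h2 : ‖(inner ℂ (z i t) (zc t) : ℂ)‖ ≤ ‖zc t‖ := by
    have h := norm_inner_le_norm (𝕜 := ℂ) (z i t) (zc t)
    rw [hnorm i t ht, one_mul] at h
    simpa using h
  nlinarith [norm_nonneg ((inner ℂ (z i t) (zc t) : ℂ))]
end

section
/- Let z_1, ..., z_N : [0,∞) → C^d solve Subsystem A with ||z_j(t)|| = 1 for all t. If ⟨z_i(t), z_j(t)⟩ ≠ 1, then d/dt ln|1 − ⟨z_i, z_j⟩| = −(κ_0/2)(⟨z_c, z_i + z_j⟩ + ⟨z_i + z_j, z_c⟩) = −κ_0 Re⟨z_i + z_j, z_c⟩. -/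
open Complex in
lemma logabs_deriv {f : ℝ → ℂ} {f' : ℂ} {t : ℝ} (hf : HasDerivAt f f' t) (h0 : f t ≠ 0) :
    HasDerivAt (fun s => Real.log ‖f s‖)
      (((starRingEnd ℂ) (f t) * f').re / Complex.normSq (f t)) t := by
  have hre : HasDerivAt (fun s => (f s).re) f'.re t :=
    (Complex.reCLM.hasFDerivAt.comp_hasDerivAt t hf)
  have him : HasDerivAt (fun s => (f s).im) f'.im t :=
    (Complex.imCLM.hasFDerivAt.comp_hasDerivAt t hf)
  have hu : HasDerivAt (fun s => (f s).re ^ 2 + (f s).im ^ 2)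
      (2 * (f t).re ^ 1 * f'.re + 2 * (f t).im ^ 1 * f'.im) t :=
    (hre.pow 2).add (him.pow 2)
  have hns : Complex.normSq (f t) ≠ 0 := by
    simpa [Complex.normSq_eq_zero] using h0
  have hden : (f t).re ^ 2 + (f t).im ^ 2 ≠ 0 := by
    simpa [Complex.normSq_apply, pow_two] using hns
  have hlog := (Real.hasDerivAt_log hden).comp t hu
  have := hlog.div_const 2
  refine HasDerivAt.congr_deriv (HasDerivAt.congr_of_eventuallyEq this (Filter.Eventually.of_forall fun s => ?_)) ?_
  · show Real.log ‖f s‖ = _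
    rw [Complex.norm_def, Real.log_sqrt (Complex.normSq_nonneg _)]
    simp [Function.comp, Complex.normSq_apply, pow_two]
  · have hden' : (f t).re * (f t).re + (f t).im * (f t).im ≠ 0 := by
      simpa [pow_two] using hden
    rw [Complex.mul_re, Complex.conj_re, Complex.conj_im, Complex.normSq_apply]
    field_simp [hden, hden']
    ring

theorem stmt6 (d N : ℕ) (κ₀ : ℝ)
    (z : Fin N → ℝ → EuclideanSpace ℂ (Fin d))
    (zc : ℝ → EuclideanSpace ℂ (Fin d))
    (hzc : ∀ t : ℝ, zc t = (N : ℂ)⁻¹ • ∑ k, z k t)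
    (hnorm : ∀ (j : Fin N) (t : ℝ), 0 ≤ t → ‖z j t‖ = 1)
    (hode : ∀ (j : Fin N) (t : ℝ), 0 ≤ t → HasDerivAt (z j)
      ((κ₀ : ℂ) • ((inner ℂ (z j t) (z j t) : ℂ) • zc t
          - (inner ℂ (zc t) (z j t) : ℂ) • z j t)) t)
    (i j : Fin N) (t : ℝ) (ht : 0 ≤ t)
    (hne : (inner ℂ (z i t) (z j t) : ℂ) ≠ 1) :
    HasDerivAt (fun s => Real.log ‖(1 : ℂ) - inner ℂ (z i s) (z j s)‖)
      (-κ₀ * ((inner ℂ (z i t + z j t) (zc t) : ℂ)).re) t := by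
  set a := z i t with ha
  set b := z j t with hb
  set c := zc t with hc
  have hii : (inner ℂ a a : ℂ) = 1 := by
    rw [inner_self_eq_norm_sq_to_K, hnorm i t ht]; norm_num
  have hjj : (inner ℂ b b : ℂ) = 1 := by
    rw [inner_self_eq_norm_sq_to_K, hnorm j t ht]; norm_num
  set g : ℂ := inner ℂ a b with hg
  set α : ℂ := (inner ℂ a c : ℂ) + (inner ℂ c b : ℂ) with hα
  have hG : HasDerivAt (fun s => (inner ℂ (z i s) (z j s) : ℂ))
      ((κ₀ : ℂ) * (1 - g) * α) t := by
    have := (hode i t ht).inner ℂ (hode j t ht)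
    refine HasDerivAt.congr_deriv this ?_
    simp only [inner_smul_left, inner_smul_right, inner_sub_left, inner_sub_right,
      Complex.conj_ofReal, hii, hjj, inner_conj_symm, map_one, ← ha, ← hb, ← hc, ← hg]
    ring
  have hf := (hasDerivAt_const t (1:ℂ)).sub hG
  rw [zero_sub] at hf
  have h0 : (1 : ℂ) - g ≠ 0 := by
    intro h
    apply hne
    rw [hg] at h
    linear_combination -h
  have := logabs_deriv hf (by simpa using h0)
  convert this using 1
  · rfl
  show _ = ((starRingEnd ℂ) (1 - g) * -((κ₀ : ℂ) * (1 - g) * α)).re / Complex.normSq (1 - g)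
  have hns : Complex.normSq (1 - g) ≠ 0 := by simpa [Complex.normSq_eq_zero] using h0
  rw [eq_div_iff hns]
  have hconj : (starRingEnd ℂ) (1 - g) * (-((κ₀ : ℂ) * (1 - g) * α))
      = -(κ₀ : ℂ) * (Complex.normSq (1 - g) : ℂ) * α := by
    rw [Complex.normSq_eq_conj_mul_self]
    ring
  rw [hconj]
  have hre : ((inner ℂ (a + b) c : ℂ)).re = α.re := by
    simp only [hα, inner_add_left, Complex.add_re]
    congr 1
    rw [← inner_conj_symm b c, Complex.conj_re]
  simp only [← ha, ← hb, ← hc, hre]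
  have : (-(κ₀:ℂ) * (Complex.normSq (1 - g) : ℂ) * α).re
      = -κ₀ * Complex.normSq (1 - g) * α.re := by
    simp [Complex.mul_re, Complex.ofReal_mul]
  rw [this]
  ring
end

section
/- Let z_1, ..., z_N : [0,∞) → C^d solve Subsystem A with unit-norm initial data, and assume λ_M(0) := max_{i≠j} |1 − ⟨z_i(0), z_j(0)⟩| < 1/2 and κ_0 > 0. Then for all i, j and all t ≥ 0: |1 − ⟨z_i(t), z_j(t)⟩| ≤ |1 − ⟨z_i(0), z_j(0)⟩| · exp(−κ_0(1 − 2λ_M(0)) t). In particular the configuration aggregates completely and exponentially fast. -/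
open scoped ComplexConjugate
open Set

theorem stmt7 (d N : ℕ) (κ₀ : ℝ) (hκ : 0 < κ₀)
    (z : Fin N → ℝ → EuclideanSpace ℂ (Fin d))
    (zc : ℝ → EuclideanSpace ℂ (Fin d))
    (hzc : ∀ t : ℝ, zc t = (N : ℂ)⁻¹ • ∑ k, z k t)
    (hinit : ∀ j, ‖z j 0‖ = 1)
    (hode : ∀ (j : Fin N) (t : ℝ), 0 ≤ t → HasDerivAt (z j)
      ((κ₀ : ℂ) • ((inner ℂ (z j t) (z j t) : ℂ) • zc t
          - (inner ℂ (zc t) (z j t) : ℂ) • z j t)) t)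
    (lamM : ℝ)
    (hlamM : IsGreatest
      {x : ℝ | ∃ i j : Fin N, i ≠ j ∧ x = ‖(1 : ℂ) - inner ℂ (z i 0) (z j 0)‖}
      lamM)
    (hsmall : lamM < 1 / 2) :
    ∀ (i j : Fin N) (t : ℝ), 0 ≤ t →
      ‖(1 : ℂ) - inner ℂ (z i t) (z j t)‖
        ≤ ‖(1 : ℂ) - inner ℂ (z i 0) (z j 0)‖
          * Real.exp (-κ₀ * (1 - 2 * lamM) * t) := by
  classical
  obtain ⟨⟨i₀, j₀, hij₀, hl₀⟩, hub⟩ := hlamM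
  have hNpos : 0 < N := i₀.pos
  have hlam0 : 0 ≤ lamM := hl₀ ▸ norm_nonneg _
  set μ : ℝ := (lamM + 1/2)/2 with hμdef
  have hlamμ : lamM < μ := by rw [hμdef]; linarith
  have hμhalf : μ < 1/2 := by rw [hμdef]; linarith
  have hμ0 : 0 ≤ μ := le_of_lt (lt_of_le_of_lt hlam0 hlamμ)
  set r : ℝ := 2 - 2*μ with hrdef
  have hrpos : 0 < r := by rw [hrdef]; linarith
  have hrge : 1 - 2*lamM ≤ r := by rw [hrdef, hμdef]; linarith
  -- the disagreement function
  set h : Fin N → Fin N → ℝ → ℂ :=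
    fun i j t => (1 : ℂ) - (inner ℂ (z i t) (z j t) : ℂ) with hdef
  -- norm conservation
  have hnorm : ∀ (j : Fin N) (t : ℝ), 0 ≤ t →
      (inner ℂ (z j t) (z j t) : ℂ) = 1 := by
    intro j t ht
    have key : ∀ s : ℝ, 0 ≤ s →
        HasDerivAt (fun u => (inner ℂ (z j u) (z j u) : ℂ)) 0 s := by
      intro s hs
      have hd := (hode j s hs).inner ℂ (hode j s hs)
      refine hd.congr_deriv ?_
      simp only [inner_smul_right, inner_smul_left, inner_sub_right, inner_sub_left,
        inner_conj_symm, Complex.conj_ofReal, map_mul, map_sub]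
      ring
    have hconst := constant_of_has_deriv_right_zero
      (f := fun u => (inner ℂ (z j u) (z j u) : ℂ)) (a := 0) (b := t)
      (fun s hs => ((key s hs.1).continuousAt).continuousWithinAt)
      (fun s hs => (key s hs.1).hasDerivWithinAt)
    have h0 : (inner ℂ (z j 0) (z j 0) : ℂ) = 1 := by
      rw [inner_self_eq_norm_sq_to_K, hinit j]; norm_num
    have := hconst t ⟨ht, le_refl t⟩
    exact this.trans h0
  have hdiag : ∀ (i : Fin N) (t : ℝ), 0 ≤ t → h i i t = 0 := by
    intro i t ht
    show (1 : ℂ) - (inner ℂ (z i t) (z i t) : ℂ) = 0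
    rw [hnorm i t ht, sub_self]
  -- mean field coefficient
  set α : Fin N → Fin N → ℝ → ℂ :=
    fun i j t => (inner ℂ (zc t) (z j t) : ℂ) + (inner ℂ (z i t) (zc t) : ℂ) with hαdef
  -- the exact ODE for h
  have hderiv : ∀ (i j : Fin N) (t : ℝ), 0 ≤ t →
      HasDerivAt (h i j) (-(κ₀:ℂ) * α i j t * h i j t) t := by
    intro i j t ht
    have hd := ((hode i t ht).inner ℂ (hode j t ht)).const_sub (1 : ℂ)
    refine hd.congr_deriv ?_
    simp only [hdef, hαdef, inner_smul_right, inner_smul_left, inner_sub_right, inner_sub_left,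
      inner_conj_symm, Complex.conj_ofReal, map_mul, map_sub, map_one,
      hnorm i t ht, hnorm j t ht]
    ring
  -- lower bound on Re α
  have hα_re : ∀ (i j : Fin N) (t : ℝ), 0 ≤ t →
      (∀ k l : Fin N, k ≠ l → ‖h k l t‖ ≤ μ) → r ≤ (α i j t).re := by
    intro i j t ht hbnd
    have hbnd' : ∀ k l : Fin N, 1 - μ ≤ ((inner ℂ (z k t) (z l t) : ℂ)).re := by
      intro k l
      have hk : (inner ℂ (z k t) (z l t) : ℂ) = 1 - h k l t := by
        simp [hdef]
      rw [hk, Complex.sub_re, Complex.one_re]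
      have : (h k l t).re ≤ μ := by
        rcases eq_or_ne k l with rfl | hkl
        · rw [hdiag k t ht]; simpa using hμ0
        · exact le_trans (Complex.re_le_norm _)
            (by exact hbnd k l hkl)
      linarith
    have e1 : (inner ℂ (zc t) (z j t) : ℂ)
        = (N:ℂ)⁻¹ * ∑ k, (inner ℂ (z k t) (z j t) : ℂ) := by
      rw [hzc t, inner_smul_left, sum_inner, map_inv₀, Complex.conj_natCast]
    have e2 : (inner ℂ (z i t) (zc t) : ℂ)
        = (N:ℂ)⁻¹ * ∑ k, (inner ℂ (z i t) (z k t) : ℂ) := by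
      rw [hzc t, inner_smul_right, inner_sum]
    have hcast : (N:ℂ)⁻¹ = (((N:ℝ)⁻¹ : ℝ) : ℂ) := by push_cast; ring
    have hre : ∀ (f : Fin N → ℂ), (∀ k, 1 - μ ≤ (f k).re) →
        1 - μ ≤ ((N:ℂ)⁻¹ * ∑ k, f k).re := by
      intro f hf
      rw [hcast, Complex.re_ofReal_mul, Complex.re_sum]
      have hsum : (N:ℝ) * (1 - μ) ≤ ∑ k, (f k).re := by
        calc (N:ℝ) * (1 - μ) = ∑ _k : Fin N, (1 - μ) := by
              simp [Finset.sum_const, Finset.card_univ, mul_comm]; ring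
          _ ≤ ∑ k, (f k).re := Finset.sum_le_sum (fun k _ => hf k)
      have hNR : (0:ℝ) < (N:ℝ) := by exact_mod_cast hNpos
      calc 1 - μ = (N:ℝ)⁻¹ * ((N:ℝ) * (1 - μ)) := by field_simp
        _ ≤ (N:ℝ)⁻¹ * ∑ k, (f k).re := by
            apply mul_le_mul_of_nonneg_left hsum (by positivity)
    have h1 : 1 - μ ≤ ((inner ℂ (zc t) (z j t) : ℂ)).re := by
      rw [e1]; exact hre _ (fun k => hbnd' k j)
    have h2 : 1 - μ ≤ ((inner ℂ (z i t) (zc t) : ℂ)).re := by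
      rw [e2]; exact hre _ (fun k => hbnd' i k)
    have : (α i j t).re = ((inner ℂ (zc t) (z j t) : ℂ)).re
        + ((inner ℂ (z i t) (zc t) : ℂ)).re := by
      rw [hαdef]; exact Complex.add_re _ _
    rw [this, hrdef]; linarith
  -- decay lemma on an interval where the μ-bound holds
  have hdecay : ∀ b : ℝ, 0 ≤ b →
      (∀ s ∈ Icc (0:ℝ) b, ∀ k l : Fin N, k ≠ l → ‖h k l s‖ ≤ μ) →
      ∀ (i j : Fin N), ∀ t ∈ Icc (0:ℝ) b,
        ‖h i j t‖ ≤ ‖h i j 0‖ * Real.exp (-(κ₀ * r) * t) := by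
    intro b hb hbnd i j t htmem
    set φ : ℝ → ℝ := fun s => ‖h i j s‖^2 * Real.exp (2 * κ₀ * r * s) with hφdef
    have hφd : ∀ s : ℝ, 0 ≤ s → HasDerivAt φ
        ((-(κ₀) * (2 * (α i j s).re) * ‖h i j s‖^2) * Real.exp (2 * κ₀ * r * s)
          + ‖h i j s‖^2 * (Real.exp (2 * κ₀ * r * s) * (2 * κ₀ * r))) s := by
      intro s hs
      have hg : HasDerivAt (fun u => (inner ℂ (h i j u) (h i j u) : ℂ))
          ((inner ℂ (h i j s) (-(κ₀:ℂ) * α i j s * h i j s) : ℂ)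
            + (inner ℂ (-(κ₀:ℂ) * α i j s * h i j s) (h i j s) : ℂ)) s :=
        (hderiv i j s hs).inner ℂ (hderiv i j s hs)
      have hgr : HasDerivAt (fun u => ‖h i j u‖^2)
          (-(κ₀) * (2 * (α i j s).re) * ‖h i j s‖^2) s := by
        have hre := (Complex.reCLM.hasFDerivAt).comp_hasDerivAt s hg
        have heq : (fun u => Complex.reCLM ((inner ℂ (h i j u) (h i j u) : ℂ)))
            = fun u => ‖h i j u‖^2 := by
          funext u
          simp only [Complex.reCLM_apply, RCLike.inner_apply]
          rw [Complex.mul_re]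
          simp [Complex.normSq_apply, Complex.sq_norm, Complex.normSq_apply]
        simp only [Function.comp_def] at hre
        rw [heq] at hre
        refine hre.congr_deriv ?_
        have h1 : (starRingEnd ℂ) (h i j s) * h i j s = ((‖h i j s‖^2 : ℝ) : ℂ) := by
          rw [mul_comm, Complex.mul_conj]
          norm_cast
          rw [Complex.normSq_eq_norm_sq]
        have hconj : (inner ℂ (h i j s) (-(κ₀:ℂ) * α i j s * h i j s) : ℂ)
            + (inner ℂ (-(κ₀:ℂ) * α i j s * h i j s) (h i j s) : ℂ)
            = ((-(κ₀) * (2 * (α i j s).re) * ‖h i j s‖^2 : ℝ) : ℂ) := by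
          simp only [RCLike.inner_apply, map_mul, map_neg, Complex.conj_conj,
            Complex.conj_ofReal]
          rw [show ((-(κ₀) * (2 * (α i j s).re) * ‖h i j s‖^2 : ℝ) : ℂ)
              = -(κ₀:ℂ) * (α i j s + (starRingEnd ℂ) (α i j s))
                * ((starRingEnd ℂ) (h i j s) * h i j s) from by
            rw [Complex.add_conj, h1]; push_cast; ring]
          ring
        rw [hconj]
        simp only [Complex.reCLM_apply, Complex.ofReal_re]
      have hexp : HasDerivAt (fun s => Real.exp (2 * κ₀ * r * s))
          (Real.exp (2 * κ₀ * r * s) * (2 * κ₀ * r)) s := by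
        have : HasDerivAt (fun s : ℝ => 2 * κ₀ * r * s) (2 * κ₀ * r) s := by
          simpa using (hasDerivAt_id s).const_mul (2 * κ₀ * r)
        exact this.exp
      exact hgr.mul hexp
    have hφanti : AntitoneOn φ (Icc 0 b) := by
      apply antitoneOn_of_deriv_nonpos (convex_Icc 0 b)
      · intro s hs
        exact ((hφd s hs.1).continuousAt).continuousWithinAt
      · intro s hs
        rw [interior_Icc] at hs
        exact ((hφd s hs.1.le).differentiableAt).differentiableWithinAt
      · intro s hs
        rw [interior_Icc] at hs
        rw [(hφd s hs.1.le).deriv]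
        have hα := hα_re i j s hs.1.le (fun k l hkl => hbnd s ⟨hs.1.le, hs.2.le⟩ k l hkl)
        have hE : 0 < Real.exp (2 * κ₀ * r * s) := Real.exp_pos _
        have hh2 : 0 ≤ ‖h i j s‖^2 := sq_nonneg _
        nlinarith [mul_nonneg (mul_nonneg hκ.le (sub_nonneg.mpr hα)) hh2]
    have hφle := hφanti (left_mem_Icc.mpr hb) htmem htmem.1
    have hφ0 : φ 0 = ‖h i j 0‖^2 := by simp [hφdef]
    have hsq : ‖h i j t‖^2 ≤ (‖h i j 0‖ * Real.exp (-(κ₀ * r) * t))^2 := by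
      have h1 : ‖h i j t‖^2 * Real.exp (2 * κ₀ * r * t) ≤ ‖h i j 0‖^2 := hφ0 ▸ hφle
      have hE : 0 < Real.exp (2 * κ₀ * r * t) := Real.exp_pos _
      have h2 : (‖h i j 0‖ * Real.exp (-(κ₀ * r) * t))^2
          = ‖h i j 0‖^2 / Real.exp (2 * κ₀ * r * t) := by
        have hz : ((2:ℕ):ℝ) * (-(κ₀ * r) * t) + 2 * κ₀ * r * t = 0 := by push_cast; ring
        rw [mul_pow, ← Real.exp_nat_mul, eq_div_iff hE.ne', mul_assoc, ← Real.exp_add,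
          hz, Real.exp_zero, mul_one]
      rw [h2, le_div_iff₀ hE]
      exact h1
    exact (pow_le_pow_iff_left₀ (norm_nonneg _)
      (by positivity) (two_ne_zero)).mp hsq
  -- initial bound
  have hinit_bound : ∀ (i j : Fin N), i ≠ j → ‖h i j 0‖ ≤ lamM := by
    intro i j hij
    rw [hdef]
    exact hub ⟨i, j, hij, rfl⟩
  -- bootstrap: the μ-bound holds for all nonneg times
  have hboot : ∀ T : ℝ, 0 ≤ T → ∀ s ∈ Icc (0:ℝ) T, ∀ k l : Fin N, k ≠ l →
      ‖h k l s‖ ≤ μ := by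
    intro T hT
    set S : Set ℝ := {b | b ∈ Icc (0:ℝ) T ∧
      ∀ s ∈ Icc (0:ℝ) b, ∀ k l : Fin N, k ≠ l → ‖h k l s‖ ≤ μ} with hSdef
    have hS0 : (0:ℝ) ∈ S := by
      refine ⟨⟨le_refl 0, hT⟩, ?_⟩
      intro s hs k l hkl
      have : s = 0 := le_antisymm hs.2 hs.1
      subst this
      exact le_of_lt (lt_of_le_of_lt (hinit_bound k l hkl) hlamμ)
    have hSne : S.Nonempty := ⟨0, hS0⟩
    have hSbdd : BddAbove S := ⟨T, fun b hb => hb.1.2⟩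
    set b₀ : ℝ := sSup S with hb₀def
    have hb₀0 : 0 ≤ b₀ := le_csSup hSbdd hS0
    have hb₀T : b₀ ≤ T := csSup_le hSne (fun b hb => hb.1.2)
    have hb₀S : b₀ ∈ S := by
      refine ⟨⟨hb₀0, hb₀T⟩, ?_⟩
      intro s hs k l hkl
      rcases lt_or_eq_of_le hs.2 with hlt | heq
      · obtain ⟨b, hbS, hsb⟩ := exists_lt_of_lt_csSup hSne hlt
        exact hbS.2 s ⟨hs.1, hsb.le⟩ k l hkl
      · subst heq
        by_contra hgt
        push_neg at hgt
        have hcont : ContinuousAt (fun u => ‖h k l u‖) b₀ :=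
          ((hderiv k l b₀ hb₀0).continuousAt).norm
        have hev : ∀ᶠ u in nhds b₀, μ < ‖h k l u‖ :=
          Filter.Tendsto.eventually_const_lt hgt hcont.tendsto
        rw [Metric.eventually_nhds_iff] at hev
        obtain ⟨ε, hε, hball⟩ := hev
        obtain ⟨b, hbS, hbgt⟩ := exists_lt_of_lt_csSup hSne
          (show b₀ - ε < sSup S by rw [← hb₀def]; linarith)
        have hble : b ≤ b₀ := le_csSup hSbdd hbS
        have hdist : dist b b₀ < ε := by
          rw [Real.dist_eq, abs_lt]; constructor <;> linarith
        have h3 := hball hdist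
        have h4 := hbS.2 b ⟨hbS.1.1, le_refl b⟩ k l hkl
        linarith
    rcases eq_or_lt_of_le hb₀T with heq | hlt
    · intro s hs; exact hb₀S.2 s (heq ▸ hs)
    · exfalso
      -- strict improvement at b₀
      have hstrict : ∀ k l : Fin N, k ≠ l → ‖h k l b₀‖ < μ := by
        intro k l hkl
        have := hdecay b₀ hb₀0 hb₀S.2 k l b₀ ⟨hb₀0, le_refl _⟩
        have hexp : Real.exp (-(κ₀ * r) * b₀) ≤ 1 := by
          rw [Real.exp_le_one_iff]
          nlinarith [mul_nonneg (mul_nonneg hκ.le hrpos.le) hb₀0]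
        calc ‖h k l b₀‖ ≤ ‖h k l 0‖ * Real.exp (-(κ₀ * r) * b₀) := this
          _ ≤ lamM * 1 := by
              apply mul_le_mul (hinit_bound k l hkl) hexp (Real.exp_pos _).le hlam0
          _ = lamM := mul_one _
          _ < μ := hlamμ
      have hev : ∀ᶠ u in nhds b₀, ∀ k : Fin N, ∀ l : Fin N, k ≠ l → ‖h k l u‖ < μ := by
        rw [Filter.eventually_all]
        intro k
        rw [Filter.eventually_all]
        intro l
        rcases eq_or_ne k l with rfl | hkl
        · exact Filter.Eventually.of_forall (fun u h => absurd rfl h)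
        · have hcont : ContinuousAt (fun u => ‖h k l u‖) b₀ :=
            ((hderiv k l b₀ hb₀0).continuousAt).norm
          have hev2 := Filter.Tendsto.eventually_lt_const (hstrict k l hkl) hcont.tendsto
          filter_upwards [hev2] with u hu _ using hu
      rw [Metric.eventually_nhds_iff] at hev
      obtain ⟨ε, hε, hball⟩ := hev
      set b' : ℝ := min (b₀ + ε/2) T with hb'def
      have hb'S : b' ∈ S := by
        refine ⟨⟨le_trans hb₀0 ?_, min_le_right _ _⟩, ?_⟩
        · exact le_min (by linarith) hlt.le
        · intro s hs k l hkl
          rcases le_or_gt s b₀ with hsb | hsb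
          · exact hb₀S.2 s ⟨hs.1, hsb⟩ k l hkl
          · have hdist : dist s b₀ < ε := by
              rw [Real.dist_eq, abs_lt]
              have : s ≤ b₀ + ε/2 := le_trans hs.2 (min_le_left _ _)
              constructor <;> linarith
            exact (hball hdist k l hkl).le
      have : b' ≤ b₀ := le_csSup hSbdd hb'S
      have : b₀ < b' := by
        rw [hb'def]
        exact lt_min (by linarith) hlt
      linarith
  -- conclusion
  intro i j t ht
  have hμbnd := hboot t ht
  have hfin := hdecay t ht hμbnd i j t ⟨ht, le_refl t⟩
  have hexp : Real.exp (-(κ₀ * r) * t) ≤ Real.exp (-κ₀ * (1 - 2 * lamM) * t) := by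
    apply Real.exp_le_exp.mpr
    nlinarith [mul_nonneg (mul_nonneg hκ.le ht) (sub_nonneg.mpr hrge)]
  calc ‖(1 : ℂ) - inner ℂ (z i t) (z j t)‖
      = ‖h i j t‖ := by rw [hdef]
    _ ≤ ‖h i j 0‖ * Real.exp (-(κ₀ * r) * t) := hfin
    _ ≤ ‖h i j 0‖ * Real.exp (-κ₀ * (1 - 2 * lamM) * t) := by
        apply mul_le_mul_of_nonneg_left hexp (norm_nonneg _)
    _ = ‖(1 : ℂ) - inner ℂ (z i 0) (z j 0)‖
          * Real.exp (-κ₀ * (1 - 2 * lamM) * t) := by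
        rw [hdef]
end

section
/- Suppose real-valued functions J, I satisfy d/dt (J² + I²) ≤ −(α − β)(J² + I²) where α − β ≥ 2κ_0(1 − 2λ) and λ(t) = sqrt(I(t)² + J(t)²) with λ(0) < 1/2 and κ_0 > 0. Then λ(t) ≤ λ(0) / [2((1/2 − λ(0)) e^{κ_0 t} + λ(0))] ≤ λ(0) for all t ≥ 0, and consequently J(t)² + I(t)² ≤ (J(0)² + I(0)²) e^{−2κ_0(1 − 2λ(0)) t}. -/
theorem stmt9 (κ₀ : ℝ) (hκ : 0 < κ₀) (J I D lam : ℝ → ℝ)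
    (hlam : ∀ t : ℝ, lam t = Real.sqrt (I t ^ 2 + J t ^ 2))
    (hD : ∀ t : ℝ, 0 ≤ t → HasDerivAt (fun s => J s ^ 2 + I s ^ 2) (D t) t)
    (hineq : ∀ t : ℝ, 0 ≤ t → D t ≤ -2 * κ₀ * (1 - 2 * lam t) * lam t ^ 2)
    (h0 : lam 0 < 1 / 2) :
    ∀ t : ℝ, 0 ≤ t →
      lam t ≤ lam 0 / (2 * ((1 / 2 - lam 0) * Real.exp (κ₀ * t) + lam 0)) ∧
      lam t ≤ lam 0 ∧
      J t ^ 2 + I t ^ 2 ≤ (J 0 ^ 2 + I 0 ^ 2) * Real.exp (-2 * κ₀ * (1 - 2 * lam 0) * t) := by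
  have hfnn : ∀ s : ℝ, 0 ≤ J s ^ 2 + I s ^ 2 := fun s => by positivity
  have hlam' : ∀ s : ℝ, lam s = Real.sqrt (J s ^ 2 + I s ^ 2) := by
    intro s; rw [hlam s, add_comm]
  have hlamnn : ∀ s : ℝ, 0 ≤ lam s := fun s => by
    rw [hlam' s]; exact Real.sqrt_nonneg _
  have hlamsq : ∀ s : ℝ, lam s ^ 2 = J s ^ 2 + I s ^ 2 := fun s => by
    rw [hlam' s, Real.sq_sqrt (hfnn s)]
  have hf0 : J 0 ^ 2 + I 0 ^ 2 < 1 / 4 := by nlinarith [hlamsq 0, hlamnn 0]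
  have hcont : ContinuousOn (fun s => J s ^ 2 + I s ^ 2) (Set.Ici (0 : ℝ)) := by
    intro s hs
    exact ((hD s hs).continuousAt).continuousWithinAt
  -- if f s < 1/4 then lam s < 1/2
  have hlamlt : ∀ s : ℝ, J s ^ 2 + I s ^ 2 < 1 / 4 → lam s < 1 / 2 := by
    intro s hs
    nlinarith [hlamsq s, hlamnn s]
  have hDle : ∀ s : ℝ, 0 ≤ s → J s ^ 2 + I s ^ 2 < 1 / 4 → D s ≤ 0 := by
    intro s hs hfs
    have h1 := hineq s hs
    have h2 : lam s < 1 / 2 := hlamlt s hfs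
    nlinarith [mul_nonneg (mul_nonneg hκ.le (by linarith : (0:ℝ) ≤ 1 - 2 * lam s))
      (sq_nonneg (lam s))]
  -- f stays below 1/4
  have hquarter : ∀ s : ℝ, 0 ≤ s → J s ^ 2 + I s ^ 2 < 1 / 4 := by
    by_contra hcon
    push_neg at hcon
    obtain ⟨t₀, ht₀, hft₀⟩ := hcon
    set S : Set ℝ := Set.Ici (0:ℝ) ∩ (fun s => J s ^ 2 + I s ^ 2) ⁻¹' Set.Ici (1/4 : ℝ)
      with hS
    have hne : S.Nonempty := ⟨t₀, ht₀, hft₀⟩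
    have hbdd : BddBelow S := ⟨0, fun x hx => hx.1⟩
    have hclosed : IsClosed S :=
      hcont.preimage_isClosed_of_isClosed isClosed_Ici isClosed_Ici
    have hmem := hclosed.csInf_mem hne hbdd
    set c := sInf S with hc
    have hc0 : (0:ℝ) ≤ c := hmem.1
    have hfc : (1/4 : ℝ) ≤ J c ^ 2 + I c ^ 2 := hmem.2
    have hlt : ∀ x : ℝ, 0 ≤ x → x < c → J x ^ 2 + I x ^ 2 < 1 / 4 := by
      intro x hx hxc
      by_contra h
      push_neg at h
      exact absurd (csInf_le hbdd ⟨hx, h⟩) (not_le.2 hxc)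
    have hA : AntitoneOn (fun s => J s ^ 2 + I s ^ 2) (Set.Icc 0 c) := by
      apply antitoneOn_of_deriv_nonpos (convex_Icc 0 c)
        (hcont.mono Set.Icc_subset_Ici_self)
      · intro x hx
        rw [interior_Icc] at hx
        exact ((hD x hx.1.le).differentiableAt).differentiableWithinAt
      · intro x hx
        rw [interior_Icc] at hx
        rw [(hD x hx.1.le).deriv]
        exact hDle x hx.1.le (hlt x hx.1.le hx.2)
    have := hA (Set.left_mem_Icc.2 hc0) (Set.right_mem_Icc.2 hc0) hc0
    simp only at this
    linarith
  -- f is antitone on [0,∞)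
  have hanti : AntitoneOn (fun s => J s ^ 2 + I s ^ 2) (Set.Ici 0) := by
    apply antitoneOn_of_deriv_nonpos (convex_Ici 0) hcont
    · intro x hx
      rw [interior_Ici] at hx
      exact ((hD x hx.le).differentiableAt).differentiableWithinAt
    · intro x hx
      rw [interior_Ici] at hx
      rw [(hD x hx.le).deriv]
      exact hDle x hx.le (hquarter x hx.le)
  have hlamle : ∀ s : ℝ, 0 ≤ s → lam s ≤ lam 0 := by
    intro s hs
    have := hanti (Set.self_mem_Ici) hs hs
    simp only at this
    rw [hlam' s, hlam' 0]
    exact Real.sqrt_le_sqrt this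
  intro t ht
  have hflefl : J t ^ 2 + I t ^ 2 ≤ J 0 ^ 2 + I 0 ^ 2 := by
    have := hanti (Set.self_mem_Ici) ht ht
    simpa using this
  -- third part: Gronwall
  have hthird : J t ^ 2 + I t ^ 2 ≤ (J 0 ^ 2 + I 0 ^ 2) *
      Real.exp (-2 * κ₀ * (1 - 2 * lam 0) * t) := by
    set c : ℝ := 2 * κ₀ * (1 - 2 * lam 0) with hcdef
    have hcpos : 0 < c := by
      have := hlamnn 0
      apply mul_pos (by linarith) (by linarith)
    have hhd : ∀ s : ℝ, 0 ≤ s →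
        HasDerivAt (fun u => (J u ^ 2 + I u ^ 2) * Real.exp (c * u))
          (D s * Real.exp (c * s) + (J s ^ 2 + I s ^ 2) * (Real.exp (c * s) * c)) s := by
      intro s hs
      exact (hD s hs).mul (((hasDerivAt_id s).const_mul c).exp.congr_deriv
        (by simp only [id_eq, mul_one]))
    have hAnti : AntitoneOn (fun u => (J u ^ 2 + I u ^ 2) * Real.exp (c * u))
        (Set.Ici 0) := by
      apply antitoneOn_of_deriv_nonpos (convex_Ici 0)
      · intro s hs
        exact ((hhd s hs).continuousAt).continuousWithinAt
      · intro s hs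
        rw [interior_Ici] at hs
        exact ((hhd s hs.le).differentiableAt).differentiableWithinAt
      · intro s hs
        rw [interior_Ici] at hs
        rw [(hhd s hs.le).deriv]
        have h1 := hineq s hs.le
        have h2 : lam s ≤ lam 0 := hlamle s hs.le
        have h3 : D s + c * (J s ^ 2 + I s ^ 2) ≤ 0 := by
          have h4 : -2 * κ₀ * (1 - 2 * lam s) * lam s ^ 2 + c * lam s ^ 2 ≤ 0 := by
            rw [hcdef]
            nlinarith [mul_nonneg (mul_nonneg hκ.le (sq_nonneg (lam s)))
              (by linarith : (0:ℝ) ≤ lam 0 - lam s)]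
          rw [hlamsq s] at h4
          rw [hlamsq s] at h1
          linarith
        have hE := Real.exp_pos (c * s)
        nlinarith
    have hle := hAnti (Set.self_mem_Ici) ht ht
    simp only [mul_zero, Real.exp_zero, mul_one] at hle
    rw [show -2 * κ₀ * (1 - 2 * lam 0) * t = -(c * t) by rw [hcdef]; ring,
      Real.exp_neg, ← div_eq_mul_inv, le_div_iff₀ (Real.exp_pos _)]
    exact hle
  have hsecond : lam t ≤ lam 0 := hlamle t ht
  refine ⟨?_, hsecond, hthird⟩
  -- first part
  have hdenpos : 0 < 2 * ((1 / 2 - lam 0) * Real.exp (κ₀ * t) + lam 0) := by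
    have h1 : 0 < (1 / 2 - lam 0) * Real.exp (κ₀ * t) :=
      mul_pos (by linarith) (Real.exp_pos _)
    have := hlamnn 0
    linarith
  rcases eq_or_lt_of_le (hfnn t) with hzero | hpos
  · -- f t = 0, so lam t = 0
    have hlamt : lam t = 0 := by
      rw [hlam' t, ← hzero, Real.sqrt_zero]
    rw [hlamt]
    exact div_nonneg (hlamnn 0) (by linarith)
  · -- f t > 0
    have hfpos : ∀ s : ℝ, s ∈ Set.Icc 0 t → 0 < J s ^ 2 + I s ^ 2 := by
      intro s hs
      have := hanti (Set.mem_Ici.2 hs.1) (Set.mem_Ici.2 ht) hs.2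
      simp only at this
      linarith
    have hlampos : ∀ s : ℝ, s ∈ Set.Icc 0 t → 0 < lam s := by
      intro s hs
      rw [hlam' s]
      exact Real.sqrt_pos.2 (hfpos s hs)
    have hlam0pos : 0 < lam 0 := hlampos 0 (Set.left_mem_Icc.2 ht)
    have hlamtpos : 0 < lam t := hlampos t (Set.right_mem_Icc.2 ht)
    -- derivative of φ s = exp(-κ₀ s) * ((lam s)⁻¹ - 2)
    have hphid : ∀ s : ℝ, s ∈ Set.Icc 0 t →
        HasDerivAt (fun u => Real.exp (-κ₀ * u) * ((lam u)⁻¹ - 2))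
          ((-κ₀ * Real.exp (-κ₀ * s)) * ((lam s)⁻¹ - 2) +
            Real.exp (-κ₀ * s) * (-(D s / (2 * lam s)) / lam s ^ 2)) s := by
      intro s hs
      have hls := hlampos s hs
      have hlamd : HasDerivAt lam (D s / (2 * lam s)) s := by
        have h1 : HasDerivAt (fun u => Real.sqrt (J u ^ 2 + I u ^ 2))
            (D s / (2 * Real.sqrt (J s ^ 2 + I s ^ 2))) s :=
          (hD s hs.1).sqrt (ne_of_gt (hfpos s hs))
        rw [hlam' s]
        have h2 : lam = fun u => Real.sqrt (J u ^ 2 + I u ^ 2) := funext hlam'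
        rw [h2]
        exact h1
      have hinv : HasDerivAt (fun u => (lam u)⁻¹ - 2)
          (-(D s / (2 * lam s)) / lam s ^ 2) s :=
        (hlamd.inv (ne_of_gt hls)).sub_const 2
      have hexp : HasDerivAt (fun u => Real.exp (-κ₀ * u)) (-κ₀ * Real.exp (-κ₀ * s)) s :=
        ((hasDerivAt_id s).const_mul (-κ₀)).exp.congr_deriv
          (by simp only [id_eq, mul_one]; ring)
      exact hexp.mul hinv
    have hmono : MonotoneOn (fun u => Real.exp (-κ₀ * u) * ((lam u)⁻¹ - 2))
        (Set.Icc 0 t) := by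
      apply monotoneOn_of_deriv_nonneg (convex_Icc 0 t)
      · intro s hs
        exact ((hphid s hs).continuousAt).continuousWithinAt
      · intro s hs
        rw [interior_Icc] at hs
        exact ((hphid s (Set.Ioo_subset_Icc_self hs)).differentiableAt).differentiableWithinAt
      · intro s hs
        rw [interior_Icc] at hs
        have hs' := Set.Ioo_subset_Icc_self hs
        rw [(hphid s hs').deriv]
        have hls := hlampos s hs'
        have hi := hineq s hs.1.le
        have hE := Real.exp_pos (-κ₀ * s)
        have key : 0 ≤ -κ₀ * ((lam s)⁻¹ - 2) + -(D s / (2 * lam s)) / lam s ^ 2 := by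
          have heq : -κ₀ * ((lam s)⁻¹ - 2) + -(D s / (2 * lam s)) / lam s ^ 2 =
              (-D s - 2 * κ₀ * (1 - 2 * lam s) * lam s ^ 2) / (2 * lam s ^ 3) := by
            field_simp
            ring
          rw [heq]
          apply div_nonneg (by linarith) (by positivity)
        nlinarith
    have hm := hmono (Set.left_mem_Icc.2 ht) (Set.right_mem_Icc.2 ht) ht
    simp only [mul_zero, Real.exp_zero, one_mul] at hm
    -- hm : (lam 0)⁻¹ - 2 ≤ exp(-κ₀ t) * ((lam t)⁻¹ - 2)
    rw [le_div_iff₀ hdenpos]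
    rw [show -κ₀ * t = -(κ₀ * t) by ring, Real.exp_neg] at hm
    have hEpos := Real.exp_pos (κ₀ * t)
    have hE1 : 1 ≤ Real.exp (κ₀ * t) :=
      Real.one_le_exp (by positivity)
    have hm' : Real.exp (κ₀ * t) * ((lam 0)⁻¹ - 2) ≤ (lam t)⁻¹ - 2 := by
      rw [← mul_le_mul_iff_right₀ hEpos] at hm
      rwa [← mul_assoc, mul_inv_cancel₀ (ne_of_gt hEpos), one_mul] at hm
    have hm'' : lam 0 * lam t * (Real.exp (κ₀ * t) * ((lam 0)⁻¹ - 2)) ≤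
        lam 0 * lam t * ((lam t)⁻¹ - 2) :=
      mul_le_mul_of_nonneg_left hm' (by positivity)
    have h1 : lam 0 * lam t * (Real.exp (κ₀ * t) * ((lam 0)⁻¹ - 2)) =
        lam t * (Real.exp (κ₀ * t) * (1 - 2 * lam 0)) := by
      field_simp
    have h2 : lam 0 * lam t * ((lam t)⁻¹ - 2) = lam 0 * (1 - 2 * lam t) := by
      field_simp
    rw [h1, h2] at hm''
    nlinarith
end

section
/- Let z_j(t) = e^{iθ_j(t)} z_j(0) solve Subsystem B on C^d with unit-norm initial data, and write ⟨z_j(0), z_k(0)⟩ = R_{jk} e^{iα_{jk}} with R_{jk} ≥ 0 real. Then the phases θ_j satisfy the Kuramoto model with frustration: θ̇_j = (2κ_1/N) ∑_{k=1}^N R_{jk} sin(θ_k − θ_j + α_{jk}), θ_j(0) = 0, where R_{jk} = R_{kj} and α_{jk} = −α_{kj} (mod 2π) for all j, k. -/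
open Complex Set

lemma aux_exp3 (a b c r : ℂ) :
    Complex.exp a * (Complex.exp b * (r * Complex.exp c)) = r * Complex.exp (a + b + c) := by
  rw [Complex.exp_add, Complex.exp_add]; ring

lemma aux_exp_sub (φ : ℝ) :
    Complex.exp (Complex.I * φ) - Complex.exp (-(Complex.I * φ))
      = 2 * Complex.I * Real.sin φ := by
  rw [mul_comm Complex.I (φ : ℂ), ← neg_mul, Complex.exp_mul_I, Complex.exp_mul_I,
    Complex.cos_neg, Complex.sin_neg, Complex.ofReal_sin]
  ring

theorem stmt11 (d N : ℕ) (κ₁ : ℝ)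
    (z : Fin N → ℝ → EuclideanSpace ℂ (Fin d))
    (zc : ℝ → EuclideanSpace ℂ (Fin d))
    (hzc : ∀ t : ℝ, zc t = (N : ℂ)⁻¹ • ∑ k, z k t)
    (hinit : ∀ j, ‖z j 0‖ = 1)
    (hode : ∀ (j : Fin N) (t : ℝ), 0 ≤ t → HasDerivAt (z j)
      ((κ₁ : ℂ) • (((inner ℂ (z j t) (zc t) : ℂ)
          - (inner ℂ (zc t) (z j t) : ℂ)) • z j t)) t)
    (θ : Fin N → ℝ → ℝ)
    (hθdiff : ∀ j, Differentiable ℝ (θ j))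
    (hθ0 : ∀ j, θ j 0 = 0)
    (hz : ∀ (j : Fin N) (t : ℝ), 0 ≤ t →
      z j t = Complex.exp (Complex.I * θ j t) • z j 0)
    (R α : Fin N → Fin N → ℝ)
    (hR : ∀ j k, R j k = ‖(inner ℂ (z j 0) (z k 0) : ℂ)‖)
    (hα : ∀ j k, (inner ℂ (z j 0) (z k 0) : ℂ) = R j k * Complex.exp (Complex.I * α j k)) :
    (∀ (j : Fin N) (t : ℝ), 0 ≤ t →
      HasDerivAt (θ j)
        ((2 * κ₁ / N) * ∑ k, R j k * Real.sin (θ k t - θ j t + α j k)) t) ∧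
    (∀ j k, R j k = R k j) ∧
    (∀ j k, R j k ≠ 0 →
      Complex.exp (Complex.I * α j k) = Complex.exp (-(Complex.I * α k j))) := by
  have hRsymm : ∀ j k, R j k = R k j := by
    intro j k
    rw [hR j k, hR k j, ← inner_conj_symm (z k 0) (z j 0), Complex.norm_conj]
  refine ⟨?_, hRsymm, ?_⟩
  · intro j t ht
    set θ' : ℝ := deriv (θ j) t with hθ'
    have hθd : HasDerivAt (θ j) θ' t := ((hθdiff j) t).hasDerivAt
    set e : ℂ := Complex.exp (Complex.I * θ j t) with he
    have hg : HasDerivAt (fun s : ℝ => Complex.exp (Complex.I * θ j s) • z j 0)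
        ((e * (Complex.I * θ')) • z j 0) t := by
      have h1 : HasDerivAt (fun s : ℝ => (Complex.I * θ j s : ℂ))
          (Complex.I * θ') t := (hθd.ofReal_comp.const_mul Complex.I)
      exact (h1.cexp).smul_const (z j 0)
    set c : ℂ := (inner ℂ (z j t) (zc t) : ℂ) - (inner ℂ (zc t) (z j t) : ℂ) with hc
    have hD : HasDerivAt (z j) ((κ₁ : ℂ) • (c • z j t)) t := hode j t ht
    have hu : UniqueDiffWithinAt ℝ (Ici t) t := uniqueDiffOn_Ici t t self_mem_Ici
    have hDw : HasDerivWithinAt (fun s : ℝ => Complex.exp (Complex.I * θ j s) • z j 0)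
        ((κ₁ : ℂ) • (c • z j t)) (Ici t) t :=
      (hD.hasDerivWithinAt).congr (fun s hs => (hz j s (le_trans ht hs)).symm)
        (hz j t ht).symm
    have heq : ((κ₁ : ℂ) • (c • z j t)) = (e * (Complex.I * θ')) • z j 0 := by
      rw [← hDw.derivWithin hu, (hg.hasDerivWithinAt (s := Ici t)).derivWithin hu]
    have hz0 : z j 0 ≠ 0 := by
      intro h; have := hinit j; rw [h, norm_zero] at this; norm_num at this
    have hscal : (κ₁ : ℂ) * (c * e) = e * (Complex.I * θ') := by
      apply smul_left_injective ℂ hz0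
      simpa [hz j t ht, smul_smul] using heq
    have hexp_ne : e ≠ 0 := Complex.exp_ne_zero _
    have hscal2 : (κ₁ : ℂ) * c = Complex.I * θ' := by
      apply mul_right_cancel₀ hexp_ne
      rw [mul_assoc, hscal]; ring
    have hjk : ∀ k : Fin N, (inner ℂ (z j t) (z k t) : ℂ)
        = (R j k : ℂ) * Complex.exp (Complex.I * ((θ k t - θ j t + α j k : ℝ) : ℂ)) := by
      intro k
      rw [hz j t ht, hz k t ht, inner_smul_left, inner_smul_right, hα j k,
        ← Complex.exp_conj]
      simp only [map_mul, Complex.conj_I, Complex.conj_ofReal]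
      rw [aux_exp3]
      congr 1
      push_cast
      ring
    have hck : ∀ k : Fin N, (inner ℂ (z j t) (z k t) : ℂ) - (inner ℂ (z k t) (z j t) : ℂ)
        = 2 * Complex.I * ((R j k : ℂ) * (Real.sin (θ k t - θ j t + α j k) : ℂ)) := by
      intro k
      rw [← inner_conj_symm (z k t) (z j t), hjk k]
      simp only [map_mul, Complex.conj_ofReal, ← Complex.exp_conj, Complex.conj_I]
      rw [neg_mul, ← mul_sub, aux_exp_sub]
      ring
    have hc2 : c = (N : ℂ)⁻¹
        * ∑ k, ((inner ℂ (z j t) (z k t) : ℂ) - (inner ℂ (z k t) (z j t) : ℂ)) := by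
      rw [hc, hzc, inner_smul_right, inner_smul_left, inner_sum, sum_inner,
        Finset.mul_sum, Finset.mul_sum, Finset.mul_sum, ← Finset.sum_sub_distrib]
      simp [mul_sub]
    have hsum : ∑ k, ((inner ℂ (z j t) (z k t) : ℂ) - (inner ℂ (z k t) (z j t) : ℂ))
        = (2 * Complex.I) * ∑ k, (R j k : ℂ) * (Real.sin (θ k t - θ j t + α j k) : ℂ) := by
      rw [Finset.mul_sum]
      exact Finset.sum_congr rfl fun k _ => hck k
    have hfin : (θ' : ℂ)
        = ((2 * κ₁ / N * ∑ k, R j k * Real.sin (θ k t - θ j t + α j k) : ℝ) : ℂ) := by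
      apply mul_left_cancel₀ Complex.I_ne_zero
      rw [← hscal2, hc2, hsum]
      push_cast
      ring
    have : θ' = 2 * κ₁ / N * ∑ k, R j k * Real.sin (θ k t - θ j t + α j k) := by
      exact_mod_cast hfin
    exact this ▸ hθd
  · intro j k hne
    have h1 : (starRingEnd ℂ) (inner ℂ (z j 0) (z k 0) : ℂ) = (inner ℂ (z k 0) (z j 0) : ℂ) :=
      inner_conj_symm _ _
    rw [hα j k, hα k j, ← hRsymm j k] at h1
    have h2 : (R j k : ℂ) * Complex.exp (-(Complex.I * α j k))
        = (R j k : ℂ) * Complex.exp (Complex.I * α k j) := by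
      rw [← h1]
      simp [map_mul, Complex.conj_ofReal, ← Complex.exp_conj, Complex.conj_I]
    have hRC : (R j k : ℂ) ≠ 0 := by exact_mod_cast hne
    have h3 := mul_left_cancel₀ hRC h2
    calc Complex.exp (Complex.I * α j k)
        = (Complex.exp (-(Complex.I * α j k)))⁻¹ := by rw [Complex.exp_neg, inv_inv]
      _ = (Complex.exp (Complex.I * α k j))⁻¹ := by rw [h3]
      _ = Complex.exp (-(Complex.I * α k j)) := (Complex.exp_neg _).symm
end

section
/- Let z_1, ..., z_N : [0,∞) → C^d solve Subsystem B with ||z_j(t)|| = 1 for all t. Then d/dt ||z_c||² = (4κ_1/N) ∑_{j=1}^N (Im⟨z_j, z_c⟩)² ≥ 0 when κ_1 ≥ 0; in particular ||z_c|| is non-decreasing along the flow. -/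
theorem stmt16 (d N : ℕ) (κ₁ : ℝ) (hκ : 0 ≤ κ₁)
    (z : Fin N → ℝ → EuclideanSpace ℂ (Fin d))
    (zc : ℝ → EuclideanSpace ℂ (Fin d))
    (hzc : ∀ t : ℝ, zc t = (N : ℂ)⁻¹ • ∑ k, z k t)
    (hnorm : ∀ (j : Fin N) (t : ℝ), 0 ≤ t → ‖z j t‖ = 1)
    (hode : ∀ (j : Fin N) (t : ℝ), 0 ≤ t → HasDerivAt (z j)
      ((κ₁ : ℂ) • (((inner ℂ (z j t) (zc t) : ℂ)
          - (inner ℂ (zc t) (z j t) : ℂ)) • z j t)) t) :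
    (∀ t : ℝ, 0 ≤ t →
      HasDerivAt (fun s => ‖zc s‖ ^ 2)
        ((4 * κ₁ / N) * ∑ j, ((inner ℂ (z j t) (zc t) : ℂ)).im ^ 2) t ∧
      0 ≤ (4 * κ₁ / N) * ∑ j, ((inner ℂ (z j t) (zc t) : ℂ)).im ^ 2) ∧
    (∀ s t : ℝ, 0 ≤ s → s ≤ t → ‖zc s‖ ≤ ‖zc t‖) := by
  have hnonneg : ∀ t : ℝ,
      0 ≤ (4 * κ₁ / N) * ∑ j, ((inner ℂ (z j t) (zc t) : ℂ)).im ^ 2 := by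
    intro t
    apply mul_nonneg
    · positivity
    · exact Finset.sum_nonneg fun j _ => sq_nonneg _
  have hmain : ∀ t : ℝ, 0 ≤ t →
      HasDerivAt (fun s => ‖zc s‖ ^ 2)
        ((4 * κ₁ / N) * ∑ j, ((inner ℂ (z j t) (zc t) : ℂ)).im ^ 2) t := by
    intro t ht
    -- derivative of zc
    set w : EuclideanSpace ℂ (Fin d) :=
      (N : ℂ)⁻¹ • ∑ j, (κ₁ : ℂ) • (((inner ℂ (z j t) (zc t) : ℂ)
          - (inner ℂ (zc t) (z j t) : ℂ)) • z j t) with hw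
    have hzc' : HasDerivAt zc w t := by
      have : HasDerivAt (fun s => (N : ℂ)⁻¹ • ∑ k, z k s) w t := by
        rw [hw]
        exact (HasDerivAt.fun_sum (fun j _ => hode j t ht)).const_smul ((N : ℂ)⁻¹)
      have heq : zc = fun s => (N : ℂ)⁻¹ • ∑ k, z k s := funext hzc
      rw [heq]; exact this
    have hinner : HasDerivAt (fun s => (inner ℂ (zc s) (zc s) : ℂ))
        ((inner ℂ (zc t) w : ℂ) + (inner ℂ w (zc t) : ℂ)) t :=
      HasDerivAt.inner ℂ hzc' hzc'
    have hre : HasDerivAt (fun s => ((inner ℂ (zc s) (zc s) : ℂ)).re)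
        (((inner ℂ (zc t) w : ℂ) + (inner ℂ w (zc t) : ℂ)).re) t :=
      Complex.reCLM.hasFDerivAt.comp_hasDerivAt t hinner
    have hfun : (fun s => ((inner ℂ (zc s) (zc s) : ℂ)).re) = fun s => ‖zc s‖ ^ 2 := by
      funext s
      exact inner_self_eq_norm_sq (𝕜 := ℂ) (zc s)
    rw [hfun] at hre
    have hval : (((inner ℂ (zc t) w : ℂ) + (inner ℂ w (zc t) : ℂ)).re)
        = (4 * κ₁ / N) * ∑ j, ((inner ℂ (z j t) (zc t) : ℂ)).im ^ 2 := by
      have h1 : (inner ℂ (zc t) w : ℂ) = starRingEnd ℂ (inner ℂ w (zc t) : ℂ) :=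
        (inner_conj_symm _ _).symm
      rw [h1, Complex.add_re, Complex.conj_re, ← two_mul]
      have h2 : (inner ℂ w (zc t) : ℂ)
          = starRingEnd ℂ (N : ℂ)⁻¹ * ∑ j,
              (starRingEnd ℂ ((κ₁ : ℂ) * ((inner ℂ (z j t) (zc t) : ℂ)
                - (inner ℂ (zc t) (z j t) : ℂ)))) * (inner ℂ (z j t) (zc t) : ℂ) := by
        rw [hw, inner_smul_left, sum_inner]
        congr 1
        refine Finset.sum_congr rfl fun j _ => ?_
        rw [inner_smul_left, inner_smul_left, map_mul, mul_assoc]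
      rw [h2]
      have h3 : ∀ j : Fin N,
          ((starRingEnd ℂ ((κ₁ : ℂ) * ((inner ℂ (z j t) (zc t) : ℂ)
              - (inner ℂ (zc t) (z j t) : ℂ)))) * (inner ℂ (z j t) (zc t) : ℂ))
            = Complex.ofReal (2 * κ₁ * ((inner ℂ (z j t) (zc t) : ℂ)).im ^ 2)
              - Complex.I * Complex.ofReal (2 * κ₁ * ((inner ℂ (z j t) (zc t) : ℂ)).im
                  * ((inner ℂ (z j t) (zc t) : ℂ)).re) := by
        intro j
        have hsymm : (inner ℂ (zc t) (z j t) : ℂ)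
            = starRingEnd ℂ (inner ℂ (z j t) (zc t) : ℂ) := (inner_conj_symm _ _).symm
        rw [hsymm]
        set a : ℂ := (inner ℂ (z j t) (zc t) : ℂ)
        apply Complex.ext <;>
          simp [Complex.mul_re, Complex.mul_im, Complex.sub_re, Complex.sub_im,
            Complex.conj_re, Complex.conj_im, ← Complex.ofReal_pow, Complex.ofReal_re,
            Complex.ofReal_im] <;> push_cast <;> ring
      calc 2 * (starRingEnd ℂ (N : ℂ)⁻¹ * ∑ j,
              (starRingEnd ℂ ((κ₁ : ℂ) * ((inner ℂ (z j t) (zc t) : ℂ)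
                - (inner ℂ (zc t) (z j t) : ℂ)))) * (inner ℂ (z j t) (zc t) : ℂ)).re
          = 2 * ((N : ℝ)⁻¹ * (∑ j,
              (starRingEnd ℂ ((κ₁ : ℂ) * ((inner ℂ (z j t) (zc t) : ℂ)
                - (inner ℂ (zc t) (z j t) : ℂ)))) * (inner ℂ (z j t) (zc t) : ℂ)).re) := by
            have : starRingEnd ℂ (N : ℂ)⁻¹ = Complex.ofReal (N : ℝ)⁻¹ := by
              push_cast; simp
            rw [this, Complex.re_ofReal_mul]
        _ = 2 * ((N : ℝ)⁻¹ * ∑ j, 2 * κ₁ * ((inner ℂ (z j t) (zc t) : ℂ)).im ^ 2) := by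
            congr 2
            rw [Complex.re_sum]
            refine Finset.sum_congr rfl fun j _ => ?_
            rw [h3 j]
            simp only [Complex.sub_re, Complex.ofReal_re, Complex.mul_re,
              Complex.I_re, Complex.I_im, Complex.ofReal_im, zero_mul, one_mul,
              mul_zero, sub_zero, zero_sub, sub_neg_eq_add, add_zero, neg_zero]
        _ = (4 * κ₁ / N) * ∑ j, ((inner ℂ (z j t) (zc t) : ℂ)).im ^ 2 := by
            rw [Finset.mul_sum, Finset.mul_sum, Finset.mul_sum]
            refine Finset.sum_congr rfl fun j _ => ?_
            field_simp
            ring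
    rw [hval] at hre
    exact hre
  refine ⟨fun t ht => ⟨hmain t ht, hnonneg t⟩, fun s t hs hst => ?_⟩
  have hder : ∀ x ∈ Set.Icc s t, HasDerivAt (fun u => ‖zc u‖ ^ 2)
      ((4 * κ₁ / N) * ∑ j, ((inner ℂ (z j x) (zc x) : ℂ)).im ^ 2) x :=
    fun x hx => hmain x (hs.trans hx.1)
  have key : MonotoneOn (fun u => ‖zc u‖ ^ 2) (Set.Icc s t) := by
    apply monotoneOn_of_deriv_nonneg (convex_Icc s t)
    · exact fun x hx => ((hder x hx).continuousAt).continuousWithinAt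
    · intro x hx
      exact ((hder x (interior_subset hx)).differentiableAt).differentiableWithinAt
    · intro x hx
      rw [(hder x (interior_subset hx)).deriv]
      exact hnonneg x
  have hsq : ‖zc s‖ ^ 2 ≤ ‖zc t‖ ^ 2 :=
    key (Set.left_mem_Icc.mpr hst) (Set.right_mem_Icc.mpr hst) hst
  nlinarith [norm_nonneg (zc s), norm_nonneg (zc t), hsq]
end

section
/- Let z_1, ..., z_N : [0,∞) → C^d solve the full LHS model ż_j = κ_0(⟨z_j, z_j⟩ z_c − ⟨z_c, z_j⟩ z_j) + κ_1(⟨z_j, z_c⟩ − ⟨z_c, z_j⟩) z_j with ||z_j(t)|| = 1 for all t, and set ρ = ||z_c||. Then d(ρ²)/dt = (2κ_0/N) ∑_{i=1}^N (ρ² − |⟨z_i, z_c⟩|²) + (4(κ_0 + κ_1)/N) ∑_{i=1}^N (Im⟨z_i, z_c⟩)². In particular, if κ_0 ≥ 0 and κ_0 + κ_1 ≥ 0, then ρ is non-decreasing. -/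
open scoped InnerProductSpace ComplexConjugate

theorem stmt17 (d N : ℕ) (κ₀ κ₁ : ℝ)
    (z : Fin N → ℝ → EuclideanSpace ℂ (Fin d))
    (zc : ℝ → EuclideanSpace ℂ (Fin d))
    (hzc : ∀ t : ℝ, zc t = (N : ℂ)⁻¹ • ∑ k, z k t)
    (hnorm : ∀ (j : Fin N) (t : ℝ), 0 ≤ t → ‖z j t‖ = 1)
    (hode : ∀ (j : Fin N) (t : ℝ), 0 ≤ t → HasDerivAt (z j)
      ((κ₀ : ℂ) • ((inner ℂ (z j t) (z j t) : ℂ) • zc t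
          - (inner ℂ (zc t) (z j t) : ℂ) • z j t)
        + (κ₁ : ℂ) • (((inner ℂ (z j t) (zc t) : ℂ)
          - (inner ℂ (zc t) (z j t) : ℂ)) • z j t)) t) :
    (∀ t : ℝ, 0 ≤ t →
      HasDerivAt (fun s => ‖zc s‖ ^ 2)
        ((2 * κ₀ / N) * ∑ i, (‖zc t‖ ^ 2 - ‖(inner ℂ (z i t) (zc t) : ℂ)‖ ^ 2)
          + (4 * (κ₀ + κ₁) / N) * ∑ i, ((inner ℂ (z i t) (zc t) : ℂ)).im ^ 2) t) ∧
    (0 ≤ κ₀ → 0 ≤ κ₀ + κ₁ →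
      ∀ s t : ℝ, 0 ≤ s → s ≤ t → ‖zc s‖ ≤ ‖zc t‖) := by
  set D : Fin N → ℝ → EuclideanSpace ℂ (Fin d) := fun j t =>
    (κ₀ : ℂ) • ((inner ℂ (z j t) (z j t) : ℂ) • zc t
          - (inner ℂ (zc t) (z j t) : ℂ) • z j t)
        + (κ₁ : ℂ) • (((inner ℂ (z j t) (zc t) : ℂ)
          - (inner ℂ (zc t) (z j t) : ℂ)) • z j t) with hD
  set v : ℝ → EuclideanSpace ℂ (Fin d) := fun t => (N : ℂ)⁻¹ • ∑ j, D j t with hv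
  have hzc' : zc = fun s => (N : ℂ)⁻¹ • ∑ k, z k s := funext hzc
  have hdzc : ∀ t : ℝ, 0 ≤ t → HasDerivAt zc (v t) t := by
    intro t ht
    rw [hzc']
    exact (HasDerivAt.fun_sum (fun j _ => hode j t ht)).const_smul ((N : ℂ)⁻¹)
  -- per-index real-part computation
  have hterm : ∀ (t : ℝ), 0 ≤ t → ∀ j : Fin N,
      (inner ℂ (zc t) (D j t) : ℂ).re
        = κ₀ * (‖zc t‖ ^ 2 - ‖(inner ℂ (z j t) (zc t) : ℂ)‖ ^ 2)
          + (κ₀ + κ₁) * (2 * ((inner ℂ (z j t) (zc t) : ℂ)).im ^ 2) := by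
    intro t ht j
    have h1 : (inner ℂ (z j t) (z j t) : ℂ) = 1 := by
      rw [inner_self_eq_norm_sq_to_K, hnorm j t ht]; norm_num
    have h2 : (inner ℂ (zc t) (zc t) : ℂ) = ((‖zc t‖ : ℂ)) ^ 2 :=
      inner_self_eq_norm_sq_to_K (zc t)
    have h3 : (inner ℂ (zc t) (z j t) : ℂ) = conj (inner ℂ (z j t) (zc t) : ℂ) :=
      (inner_conj_symm _ _).symm
    simp only [hD, inner_add_right, inner_smul_right, inner_sub_right, h1, h2, h3]
    set a : ℂ := (inner ℂ (z j t) (zc t) : ℂ) with ha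
    rw [Complex.sq_norm, Complex.normSq_apply]
    simp [Complex.add_re, Complex.sub_re, Complex.mul_re, Complex.mul_im,
      Complex.conj_re, Complex.conj_im, Complex.ofReal_re, Complex.ofReal_im,
      ← Complex.ofReal_pow]
    ring
  -- value of the derivative
  have hval : ∀ (t : ℝ), 0 ≤ t →
      ((inner ℂ (zc t) (v t) : ℂ) + (inner ℂ (v t) (zc t) : ℂ)).re
        = (2 * κ₀ / N) * ∑ i, (‖zc t‖ ^ 2 - ‖(inner ℂ (z i t) (zc t) : ℂ)‖ ^ 2)
          + (4 * (κ₀ + κ₁) / N) * ∑ i, ((inner ℂ (z i t) (zc t) : ℂ)).im ^ 2 := by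
    intro t ht
    rw [← inner_conj_symm (v t) (zc t), Complex.add_conj, Complex.ofReal_re]
    have : (inner ℂ (zc t) (v t) : ℂ) = (N : ℂ)⁻¹ * ∑ j, (inner ℂ (zc t) (D j t) : ℂ) := by
      simp [hv, inner_smul_right, inner_sum]
    rw [this]
    have hcast : ((N : ℂ))⁻¹ = ((((N : ℝ))⁻¹ : ℝ) : ℂ) := by push_cast; ring
    rw [hcast]
    simp only [Complex.mul_re, Complex.ofReal_re, Complex.ofReal_im, zero_mul, sub_zero,
      Complex.re_sum]
    rw [Finset.sum_congr rfl (fun j _ => hterm t ht j)]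
    rw [Finset.sum_add_distrib]
    simp only [← Finset.mul_sum]
    rw [div_eq_mul_inv, div_eq_mul_inv]
    ring
  have hderiv : ∀ t : ℝ, 0 ≤ t →
      HasDerivAt (fun s => ‖zc s‖ ^ 2)
        ((2 * κ₀ / N) * ∑ i, (‖zc t‖ ^ 2 - ‖(inner ℂ (z i t) (zc t) : ℂ)‖ ^ 2)
          + (4 * (κ₀ + κ₁) / N) * ∑ i, ((inner ℂ (z i t) (zc t) : ℂ)).im ^ 2) t := by
    intro t ht
    have h1 : HasDerivAt (fun s => (inner ℂ (zc s) (zc s) : ℂ))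
        ((inner ℂ (zc t) (v t) : ℂ) + (inner ℂ (v t) (zc t) : ℂ)) t :=
      (hdzc t ht).inner ℂ (hdzc t ht)
    have h2 := Complex.reCLM.hasFDerivAt.comp_hasDerivAt t h1
    simp only [Function.comp_def] at h2
    have h3 : (fun s => Complex.reCLM (inner ℂ (zc s) (zc s) : ℂ)) = fun s => ‖zc s‖ ^ 2 := by
      funext s
      simp only [Complex.reCLM_apply, ← RCLike.re_to_complex]
      exact inner_self_eq_norm_sq (zc s)
    rw [h3] at h2
    rw [← hval t ht]
    exact h2
  refine ⟨hderiv, ?_⟩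
  intro hκ₀ hκ₀₁ s t hs hst
  have hmono : MonotoneOn (fun s => ‖zc s‖ ^ 2) (Set.Ici (0 : ℝ)) := by
    apply monotoneOn_of_deriv_nonneg (convex_Ici 0)
    · exact fun x hx => ((hderiv x hx).continuousAt).continuousWithinAt
    · intro x hx
      rw [interior_Ici] at hx
      exact ((hderiv x (le_of_lt hx)).differentiableAt).differentiableWithinAt
    · intro x hx
      rw [interior_Ici] at hx
      rw [(hderiv x (le_of_lt hx)).deriv]
      have hx' : (0:ℝ) ≤ x := le_of_lt hx
      have hS1 : (0:ℝ) ≤ ∑ i, (‖zc x‖ ^ 2 - ‖(inner ℂ (z i x) (zc x) : ℂ)‖ ^ 2) := by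
        apply Finset.sum_nonneg
        intro i _
        have hcs : ‖(inner ℂ (z i x) (zc x) : ℂ)‖ ≤ ‖zc x‖ := by
          have := norm_inner_le_norm (𝕜 := ℂ) (z i x) (zc x)
          rwa [hnorm i x hx', one_mul] at this
        have : ‖(inner ℂ (z i x) (zc x) : ℂ)‖ ^ 2 ≤ ‖zc x‖ ^ 2 :=
          pow_le_pow_left₀ (norm_nonneg _) hcs 2
        linarith
      have hS2 : (0:ℝ) ≤ ∑ i, ((inner ℂ (z i x) (zc x) : ℂ)).im ^ 2 :=
        Finset.sum_nonneg fun i _ => sq_nonneg _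
      have h1 : (0:ℝ) ≤ 2 * κ₀ / N := by positivity
      have h2 : (0:ℝ) ≤ 4 * (κ₀ + κ₁) / N := by positivity
      positivity
  have hf : ‖zc s‖ ^ 2 ≤ ‖zc t‖ ^ 2 :=
    hmono (Set.mem_Ici.2 hs) (Set.mem_Ici.2 (hs.trans hst)) hst
  have := Real.sqrt_le_sqrt hf
  rwa [Real.sqrt_sq (norm_nonneg _), Real.sqrt_sq (norm_nonneg _)] at this
end

section
/- Let Ω be a skew-hermitian d×d complex matrix, and let {w_j} solve ẇ_j = κ_0(⟨w_j, w_j⟩ w_c − ⟨w_c, w_j⟩ w_j) + κ_1(⟨w_j, w_c⟩ − ⟨w_c, w_j⟩) w_j with w_j(0) = z_j^{in}. Define z_j(t) = e^{Ωt} w_j(t). Then {z_j} solves ż_j = Ω z_j + κ_0(⟨z_j, z_j⟩ z_c − ⟨z_c, z_j⟩ z_j) + κ_1(⟨z_j, z_c⟩ − ⟨z_c, z_j⟩) z_j with z_j(0) = z_j^{in} (solution splitting property). -/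
set_option maxHeartbeats 1000000

open NormedSpace

theorem stmt19 (d N : ℕ) (κ₀ κ₁ : ℝ)
    (Ω : EuclideanSpace ℂ (Fin d) →L[ℂ] EuclideanSpace ℂ (Fin d))
    (hΩ : ∀ u v : EuclideanSpace ℂ (Fin d), (inner ℂ (Ω u) v : ℂ) = - inner ℂ u (Ω v))
    (zin : Fin N → EuclideanSpace ℂ (Fin d))
    (w : Fin N → ℝ → EuclideanSpace ℂ (Fin d))
    (wc : ℝ → EuclideanSpace ℂ (Fin d))
    (hwc : ∀ t : ℝ, wc t = (N : ℂ)⁻¹ • ∑ k, w k t)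
    (hw0 : ∀ j, w j 0 = zin j)
    (hwode : ∀ (j : Fin N) (t : ℝ), 0 ≤ t → HasDerivAt (w j)
      ((κ₀ : ℂ) • ((inner ℂ (w j t) (w j t) : ℂ) • wc t
          - (inner ℂ (wc t) (w j t) : ℂ) • w j t)
        + (κ₁ : ℂ) • (((inner ℂ (w j t) (wc t) : ℂ)
          - (inner ℂ (wc t) (w j t) : ℂ)) • w j t)) t)
    (z : Fin N → ℝ → EuclideanSpace ℂ (Fin d))
    (hz : ∀ (j : Fin N) (t : ℝ), z j t = NormedSpace.exp ((t : ℂ) • Ω) (w j t))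
    (zc : ℝ → EuclideanSpace ℂ (Fin d))
    (hzc : ∀ t : ℝ, zc t = (N : ℂ)⁻¹ • ∑ k, z k t) :
    (∀ j, z j 0 = zin j) ∧
    (∀ (j : Fin N) (t : ℝ), 0 ≤ t → HasDerivAt (z j)
      (Ω (z j t)
        + (κ₀ : ℂ) • ((inner ℂ (z j t) (z j t) : ℂ) • zc t
            - (inner ℂ (zc t) (z j t) : ℂ) • z j t)
        + (κ₁ : ℂ) • (((inner ℂ (z j t) (zc t) : ℂ)
            - (inner ℂ (zc t) (z j t) : ℂ)) • z j t)) t) := by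
  -- adjoint of Ω
  have hadj : ContinuousLinearMap.adjoint Ω = -Ω := by
    have h : Ω = ContinuousLinearMap.adjoint (-Ω) := by
      rw [ContinuousLinearMap.eq_adjoint_iff]
      intro x y
      simp [hΩ x y]
    rw [h, ContinuousLinearMap.adjoint_adjoint] at *
    rw [h]
    simp [ContinuousLinearMap.adjoint_adjoint]
  -- star of exp
  have hstar : ∀ t : ℝ, star (exp ((t : ℂ) • Ω)) = exp (-((t : ℂ) • Ω)) := by
    intro t
    rw [star_exp]
    congr 1
    rw [star_smul, ContinuousLinearMap.star_eq_adjoint, hadj, Complex.star_def,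
      Complex.conj_ofReal, smul_neg]
  have hUinv : ∀ t : ℝ, star (exp ((t : ℂ) • Ω)) * exp ((t : ℂ) • Ω) = 1 := by
    intro t
    rw [hstar t, ← NormedSpace.exp_add_of_commute_of_mem_ball (𝕂 := ℂ) (Commute.refl ((t:ℂ)•Ω)).neg_left
        ((NormedSpace.expSeries_radius_eq_top ℂ (EuclideanSpace ℂ (Fin d) →L[ℂ] EuclideanSpace ℂ (Fin d))).symm ▸ edist_lt_top _ _)
        ((NormedSpace.expSeries_radius_eq_top ℂ (EuclideanSpace ℂ (Fin d) →L[ℂ] EuclideanSpace ℂ (Fin d))).symm ▸ edist_lt_top _ _),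
      neg_add_cancel, NormedSpace.exp_zero]
  -- inner products are preserved
  have hinner : ∀ (t : ℝ) (a b : EuclideanSpace ℂ (Fin d)),
      (inner ℂ (exp ((t : ℂ) • Ω) a) (exp ((t : ℂ) • Ω) b) : ℂ) = inner ℂ a b := by
    intro t a b
    have h1 := ContinuousLinearMap.adjoint_inner_right (exp ((t : ℂ) • Ω)) a
      (exp ((t:ℂ)•Ω) b)
    rw [← ContinuousLinearMap.star_eq_adjoint] at h1
    rw [← h1]
    have h2 : star (exp ((t:ℂ)•Ω)) (exp ((t:ℂ)•Ω) b)
        = (star (exp ((t:ℂ)•Ω)) * exp ((t:ℂ)•Ω)) b := rfl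
    rw [h2, hUinv t]
    rfl
  -- centroid transforms
  have hUwc : ∀ t : ℝ, exp ((t : ℂ) • Ω) (wc t) = zc t := by
    intro t
    rw [hwc t, hzc t, map_smul, map_sum]
    congr 1
    exact Finset.sum_congr rfl fun k _ => (hz k t).symm
  constructor
  · intro j
    have h0 : ((0:ℝ):ℂ) • Ω = 0 := by
      rw [Complex.ofReal_zero]; exact zero_smul ℂ Ω
    rw [hz j 0, h0, NormedSpace.exp_zero, ← hw0 j]
    rfl
  · intro j t ht
    have hfun : z j = fun s : ℝ => exp ((s : ℂ) • Ω) (w j s) := funext (hz j)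
    rw [hfun]
    -- derivative of the exponential part
    have hU : HasDerivAt (fun s : ℝ => exp ((s : ℂ) • Ω))
        (Ω * exp ((t : ℂ) • Ω)) t := by
      have h1 : HasDerivAt (fun s : ℂ => exp (s • Ω)) (Ω * exp ((t:ℂ)•Ω)) (t:ℂ) :=
        hasDerivAt_exp_smul_const' Ω (t : ℂ)
      have h2 : HasDerivAt (fun s : ℝ => (s : ℂ)) 1 t := by
        simpa using! Complex.ofRealCLM.hasDerivAt
      simpa using! h1.scomp t h2
    have hW := hwode j t ht
    let R := (ContinuousLinearMap.restrictScalarsIsometry ℂ (EuclideanSpace ℂ (Fin d))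
      (EuclideanSpace ℂ (Fin d)) ℝ ℝ).toContinuousLinearMap
    have hV : HasDerivAt (fun s : ℝ => (exp ((s : ℂ) • Ω)).restrictScalars ℝ)
        ((Ω * exp ((t : ℂ) • Ω)).restrictScalars ℝ) t :=
      R.hasFDerivAt.comp_hasDerivAt t hU
    have hD := hV.clm_apply hW
    refine hD.congr_deriv (Eq.symm ?_)
    simp only [ContinuousLinearMap.coe_restrictScalars']
    rw [← hUwc t]
    simp only [hinner t, ContinuousLinearMap.mul_apply, map_add, map_smul, map_sub]
    rw [add_assoc]
end
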